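/- arXiv:2209.06210 — 8 statements merged into one kernel-verified Lean document; each statement's English description precedes it below -/
import Mathlib

section
/- Let C_f, C_g : ℕ → ℝ be monotone nondecreasing functions with C_f(0) = C_g(0) = 0 whose marginal costs M(j) := C(j) − C(j−1) (for j ≥ 1) are nonnegative and monotonically decreasing in j. If M_f(s_f + 1) ≤ M_g(s_g + 1) for some s_f, s_g ∈ ℕ, then C_f(s_f + s_g) ≤ C_f(s_f) + C_g(s_g). (Merging two resources' loads onto the resource with the smaller next marginal cost does not increase the total cost.) -/
lemma marg_anti (C : ℕ → ℝ)
    (hdec : ∀ j : ℕ, C (j + 2) - C (j + 1) ≤ C (j + 1) - C j) :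
    ∀ a b : ℕ, a ≤ b → C (b + 1) - C b ≤ C (a + 1) - C a := by
  intro a b hab
  induction b with
  | zero => simp_all
  | succ n ih =>
    rcases Nat.lt_or_ge a (n + 1) with h' | h'
    · exact le_trans (hdec n) (ih (Nat.lt_succ_iff.mp h'))
    · have : a = n + 1 := le_antisymm hab h'
      simp [this]

/-- Merging two resources' loads onto the resource with the smaller next
marginal cost does not increase the total cost, when marginal costs are
nonnegative and monotonically decreasing. -/
theorem merge_loads_decreasing_marginals
    (Cf Cg : ℕ → ℝ) (hCf : Monotone Cf) (hCg : Monotone Cg)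
    (hf0 : Cf 0 = 0) (hg0 : Cg 0 = 0)
    (hf_nonneg : ∀ j : ℕ, 0 ≤ Cf (j + 1) - Cf j)
    (hg_nonneg : ∀ j : ℕ, 0 ≤ Cg (j + 1) - Cg j)
    (hf_dec : ∀ j : ℕ, Cf (j + 2) - Cf (j + 1) ≤ Cf (j + 1) - Cf j)
    (hg_dec : ∀ j : ℕ, Cg (j + 2) - Cg (j + 1) ≤ Cg (j + 1) - Cg j)
    (s_f s_g : ℕ)
    (h : Cf (s_f + 1) - Cf s_f ≤ Cg (s_g + 1) - Cg s_g) :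
    Cf (s_f + s_g) ≤ Cf s_f + Cg s_g := by
  have key : ∀ n : ℕ, n ≤ s_g → Cf (s_f + n) ≤ Cf s_f + Cg n := by
    intro n
    induction n with
    | zero => simp [hg0]
    | succ m ih =>
      intro hm
      have hm' : m ≤ s_g := Nat.le_of_succ_le hm
      have step : Cf (s_f + m + 1) - Cf (s_f + m) ≤ Cg (m + 1) - Cg m := by
        calc Cf (s_f + m + 1) - Cf (s_f + m)
            ≤ Cf (s_f + 1) - Cf s_f := marg_anti Cf hf_dec _ _ (by omega)
          _ ≤ Cg (s_g + 1) - Cg s_g := h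
          _ ≤ Cg (m + 1) - Cg m := marg_anti Cg hg_dec _ _ (by omega)
      have := ih hm'
      have : Cf (s_f + m + 1) ≤ Cf s_f + Cg (m + 1) := by linarith
      exact this
  exact key s_g le_rfl
end

section
/- Consider n resources with cost functions C_i : ℕ → ℝ satisfying C_i(0) = 0, nonnegative marginal costs, and decreasing marginal costs (M_i(j) ≥ M_i(j+1) for all j ≥ 1), and suppose there are no upper limits. Then for every T ∈ ℕ and every assignment x : {1,…,n} → ℕ with ∑_i x_i = T, the total cost satisfies ∑_i C_i(x_i) ≥ min_{k ∈ {1,…,n}} C_k(T). Consequently, the assignment that gives all T tasks to a resource k minimizing C_k(T) (and 0 tasks to every other resource) is an optimal schedule (theorem on the optimality of MarDecUn). -/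
/-- Key concavity lemma: for a concave cost with `C 0 = 0`,
`x * C T ≤ T * C x` whenever `x ≤ T`. -/
lemma mardecun_key (C : ℕ → ℝ) (h0 : C 0 = 0)
    (hnn : ∀ j, 0 ≤ C (j + 1) - C j)
    (hdec : ∀ j, C (j + 2) - C (j + 1) ≤ C (j + 1) - C j)
    {x T : ℕ} (hx : x ≤ T) :
    (x : ℝ) * C T ≤ (T : ℝ) * C x := by
  set D : ℕ → ℝ := fun j => C (j + 1) - C j with hD
  have hanti : Antitone D := antitone_nat_of_succ_le fun j => hdec j
  have hC : ∀ m, ∑ j ∈ Finset.range m, D j = C m := by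
    intro m
    rw [Finset.sum_range_sub C m, h0, sub_zero]
  have h1 : (x : ℝ) * D x ≤ C x := by
    rw [← hC x]
    calc (x : ℝ) * D x = ∑ _j ∈ Finset.range x, D x := by
          simp [Finset.sum_const, mul_comm]
      _ ≤ ∑ j ∈ Finset.range x, D j :=
          Finset.sum_le_sum fun j hj =>
            hanti (le_of_lt (Finset.mem_range.mp hj))
  have h2 : C T - C x ≤ ((T : ℝ) - x) * D x := by
    have : C T - C x = ∑ j ∈ Finset.Ico x T, D j := by
      rw [Finset.sum_Ico_eq_sub _ hx, hC, hC]
    rw [this]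
    calc ∑ j ∈ Finset.Ico x T, D j ≤ ∑ _j ∈ Finset.Ico x T, D x :=
          Finset.sum_le_sum fun j hj => hanti (Finset.mem_Ico.mp hj).1
      _ = ((T : ℝ) - x) * D x := by
          rw [Finset.sum_const, Nat.card_Ico, nsmul_eq_mul,
            Nat.cast_sub hx]
  have hx0 : (0 : ℝ) ≤ x := Nat.cast_nonneg x
  have hTx : (0 : ℝ) ≤ (T : ℝ) - x := by
    have : (x:ℝ) ≤ (T:ℝ) := Nat.cast_le.mpr hx; linarith
  nlinarith [mul_le_mul_of_nonneg_left h2 hx0,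
    mul_le_mul_of_nonneg_left h1 hTx]

/-- Optimality of MarDecUn: with decreasing (and nonnegative) marginal costs
and no upper limits, any assignment of `T` tasks has total cost at least
`min_k C_k(T)`; consequently, giving all `T` tasks to a resource minimizing
`C_k(T)` is an optimal schedule. -/
theorem mardecun_optimal
    (n : ℕ) (hn : 1 ≤ n) (C : Fin n → ℕ → ℝ)
    (h0 : ∀ i, C i 0 = 0)
    (hnonneg : ∀ (i : Fin n) (j : ℕ), 0 ≤ C i (j + 1) - C i j)
    (hdec : ∀ (i : Fin n) (j : ℕ), C i (j + 2) - C i (j + 1) ≤ C i (j + 1) - C i j) :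
    (∀ (T : ℕ) (x : Fin n → ℕ), (∑ i, x i) = T →
      (Finset.univ.inf' ⟨⟨0, hn⟩, Finset.mem_univ _⟩ fun k => C k T) ≤ ∑ i, C i (x i)) ∧
    (∀ (T : ℕ) (k : Fin n), (∀ j, C k T ≤ C j T) →
      ∀ x : Fin n → ℕ, (∑ i, x i) = T →
        (∑ i, C i (if i = k then T else 0)) ≤ ∑ i, C i (x i)) := by
  have main : ∀ (T : ℕ) (x : Fin n → ℕ), (∑ i, x i) = T →
      (Finset.univ.inf' ⟨⟨0, hn⟩, Finset.mem_univ _⟩ fun k => C k T) ≤ ∑ i, C i (x i) := by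
    intro T x hsum
    set m := Finset.univ.inf' ⟨⟨0, hn⟩, Finset.mem_univ _⟩ fun k => C k T with hm
    have hmle : ∀ i, m ≤ C i T := fun i =>
      Finset.inf'_le _ (Finset.mem_univ i)
    rcases Nat.eq_zero_or_pos T with hT | hT
    · subst hT
      have hx0 : ∀ i, x i = 0 := by
        intro i
        exact (Finset.sum_eq_zero_iff.mp hsum) i (Finset.mem_univ i)
      have : ∑ i, C i (x i) = 0 := by
        simp [hx0, h0]
      rw [this]
      calc m ≤ C ⟨0, hn⟩ 0 := hmle _
        _ = 0 := h0 _
    · have hxle : ∀ i, x i ≤ T := by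
        intro i
        rw [← hsum]
        exact Finset.single_le_sum (fun j _ => Nat.zero_le _) (Finset.mem_univ i)
      have hstep : ∀ i, (x i : ℝ) * m ≤ (T : ℝ) * C i (x i) := by
        intro i
        calc (x i : ℝ) * m ≤ (x i : ℝ) * C i T :=
              mul_le_mul_of_nonneg_left (hmle i) (Nat.cast_nonneg _)
          _ ≤ (T : ℝ) * C i (x i) :=
              mardecun_key (C i) (h0 i) (hnonneg i) (hdec i) (hxle i)
      have hsum' : (T : ℝ) * m ≤ (T : ℝ) * ∑ i, C i (x i) := by
        calc (T : ℝ) * m = (∑ i, (x i : ℝ)) * m := by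
              rw [← Nat.cast_sum, hsum]
          _ = ∑ i, (x i : ℝ) * m := by rw [Finset.sum_mul]
          _ ≤ ∑ i, (T : ℝ) * C i (x i) := Finset.sum_le_sum fun i _ => hstep i
          _ = (T : ℝ) * ∑ i, C i (x i) := by rw [Finset.mul_sum]
      have hT' : (0 : ℝ) < T := by exact_mod_cast hT
      exact le_of_mul_le_mul_left hsum' hT'
  refine ⟨main, ?_⟩
  intro T k hk x hsum
  have hls : (∑ i, C i (if i = k then T else 0)) = C k T := by
    have : ∀ i : Fin n, C i (if i = k then T else 0) = if i = k then C k T else 0 := by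
      intro i
      split <;> simp_all [h0]
    simp only [this]
    simp
  rw [hls]
  calc C k T ≤ Finset.univ.inf' ⟨⟨0, hn⟩, Finset.mem_univ _⟩ (fun j => C j T) :=
        Finset.le_inf' _ _ fun j _ => hk j
    _ ≤ ∑ i, C i (x i) := main T x hsum
end

section
/- Consider n resources with cost functions C_i : ℕ → ℝ satisfying C_i(0) = 0, nonnegative marginal costs, and decreasing marginal costs (M_i(j) ≥ M_i(j+1) for all j ≥ 1), together with upper limits u_i ∈ ℕ. Let T ∈ ℕ with T ≤ ∑_i u_i. Then there exists an optimal assignment x (i.e., ∑_i x_i = T, x_i ≤ u_i for all i, and ∑_i C_i(x_i) minimal among all such assignments) in which at most one index i satisfies 0 < x_i < u_i; every other resource receives either 0 tasks or exactly u_i tasks. (Structural result underlying the optimality of MarDec.) -/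
private lemma sum_pair_rest {M : Type*} [AddCommMonoid M] {n : ℕ} (f : Fin n → M)
    {i j : Fin n} (hij : i ≠ j) :
    ∑ k, f k = f i + f j + ∑ k ∈ (Finset.univ.erase i).erase j, f k := by
  rw [← Finset.add_sum_erase _ f (Finset.mem_univ i),
      ← Finset.add_sum_erase _ f (Finset.mem_erase.mpr ⟨hij.symm, Finset.mem_univ j⟩),
      add_assoc]

private lemma mardec_exchange {n : ℕ} (C : Fin n → ℕ → ℝ)
    (hdec : ∀ (i : Fin n) (j : ℕ), C i (j + 2) - C i (j + 1) ≤ C i (j + 1) - C i j)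
    (u : Fin n → ℕ) (T : ℕ) {i j : Fin n} (hij : i ≠ j) :
    ∀ m (x : Fin n → ℕ), x j = m → (∑ k, x k) = T → (∀ k, x k ≤ u k) →
    (∀ y : Fin n → ℕ, (∑ k, y k) = T → (∀ k, y k ≤ u k) →
      (∑ k, C k (x k)) ≤ ∑ k, C k (y k)) →
    0 < x j → x i < u i →
    C i (x i + 1) - C i (x i) ≤ C j (x j) - C j (x j - 1) →
    ∃ x' : Fin n → ℕ, (∑ k, x' k) = T ∧ (∀ k, x' k ≤ u k) ∧
      (∀ y : Fin n → ℕ, (∑ k, y k) = T → (∀ k, y k ≤ u k) →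
        (∑ k, C k (x' k)) ≤ ∑ k, C k (y k)) ∧
      (∀ k, k ≠ i → k ≠ j → x' k = x k) ∧ (x' i = u i ∨ x' j = 0) := by
  intro m
  induction m using Nat.strong_induction_on with
  | _ m ih =>
    intro x hm hsum hub hopt hj0 hiu hA
    set x1 : Fin n → ℕ := fun k => if k = i then x i + 1 else if k = j then x j - 1 else x k
      with hx1
    have h1i : x1 i = x i + 1 := by simp [hx1]
    have h1j : x1 j = x j - 1 := by simp [hx1, hij.symm]
    have h1k : ∀ k, k ≠ i → k ≠ j → x1 k = x k := by
      intro k hk1 hk2; simp [hx1, hk1, hk2]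
    have htailN : ∑ k ∈ (Finset.univ.erase i).erase j, x1 k
        = ∑ k ∈ (Finset.univ.erase i).erase j, x k := by
      refine Finset.sum_congr rfl fun k hk => ?_
      rw [Finset.mem_erase, Finset.mem_erase] at hk
      exact h1k k hk.2.1 hk.1
    have hsum1 : (∑ k, x1 k) = T := by
      rw [sum_pair_rest x1 hij, htailN, h1i, h1j]
      rw [sum_pair_rest x hij] at hsum
      omega
    have hub1 : ∀ k, x1 k ≤ u k := by
      intro k
      by_cases hk1 : k = i
      · subst hk1; rw [h1i]; omega
      by_cases hk2 : k = j
      · subst hk2; rw [h1j]; have := hub k; omega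
      · rw [h1k k hk1 hk2]; exact hub k
    have htailC : ∑ k ∈ (Finset.univ.erase i).erase j, C k (x1 k)
        = ∑ k ∈ (Finset.univ.erase i).erase j, C k (x k) := by
      refine Finset.sum_congr rfl fun k hk => ?_
      rw [Finset.mem_erase, Finset.mem_erase] at hk
      rw [h1k k hk.2.1 hk.1]
    have hcost1 : (∑ k, C k (x1 k)) ≤ ∑ k, C k (x k) := by
      rw [sum_pair_rest (fun k => C k (x1 k)) hij, sum_pair_rest (fun k => C k (x k)) hij]
      simp only [h1i, h1j, htailC]
      linarith [hA]
    have hopt1 : ∀ y : Fin n → ℕ, (∑ k, y k) = T → (∀ k, y k ≤ u k) →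
        (∑ k, C k (x1 k)) ≤ ∑ k, C k (y k) :=
      fun y hy1 hy2 => le_trans hcost1 (hopt y hy1 hy2)
    by_cases hstop1 : x1 i = u i
    · exact ⟨x1, hsum1, hub1, hopt1, h1k, Or.inl hstop1⟩
    by_cases hstop2 : x1 j = 0
    · exact ⟨x1, hsum1, hub1, hopt1, h1k, Or.inr hstop2⟩
    have hxj2 : 2 ≤ x j := by rw [h1j] at hstop2; omega
    have hA1 : C i (x1 i + 1) - C i (x1 i) ≤ C j (x1 j) - C j (x1 j - 1) := by
      rw [h1i, h1j]
      have h1 := hdec i (x i)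
      have h2 := hdec j (x j - 2)
      have e1 : x j - 2 + 2 = x j := by omega
      have e2 : x j - 2 + 1 = x j - 1 := by omega
      rw [e1, e2] at h2
      have e3 : x i + 1 + 1 = x i + 2 := by omega
      have e4 : x j - 1 - 1 = x j - 2 := by omega
      rw [e3, e4]
      linarith [hA]
    have hlt : x1 j < m := by rw [h1j]; omega
    have h1j0 : 0 < x1 j := Nat.pos_of_ne_zero hstop2
    have h1iu : x1 i < u i := lt_of_le_of_ne (hub1 i) hstop1
    obtain ⟨x', hs', hu', ho', hk', hb'⟩ :=
      ih (x1 j) hlt x1 rfl hsum1 hub1 hopt1 h1j0 h1iu hA1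
    refine ⟨x', hs', hu', ho', fun k hk1 hk2 => ?_, hb'⟩
    rw [hk' k hk1 hk2, h1k k hk1 hk2]

private lemma mardec_feasible {n : ℕ} (u : Fin n → ℕ) :
    ∀ T : ℕ, T ≤ ∑ i, u i → ∃ x : Fin n → ℕ, (∑ i, x i) = T ∧ ∀ i, x i ≤ u i := by
  intro T
  induction T with
  | zero => exact fun _ => ⟨0, by simp, fun i => Nat.zero_le _⟩
  | succ t iht =>
    intro hT
    obtain ⟨x, hs, hle⟩ := iht (le_of_lt (Nat.lt_of_succ_le hT))
    have hlt : ∑ i, x i < ∑ i, u i := by omega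
    have : ∃ i, x i < u i := by
      by_contra h
      push_neg at h
      exact absurd (Finset.sum_le_sum fun i _ => h i) (not_le.2 hlt)
    obtain ⟨i, hi⟩ := this
    refine ⟨Function.update x i (x i + 1), ?_, ?_⟩
    · rw [Finset.sum_update_of_mem (Finset.mem_univ i), Finset.sdiff_singleton_eq_erase]
      rw [← Finset.add_sum_erase _ x (Finset.mem_univ i)] at hs
      omega
    · intro k
      by_cases hk : k = i
      · subst hk; simp [Function.update]; omega
      · simp [Function.update, hk]; exact hle k

/-- Structural result underlying the optimality of MarDec: with nonnegative and
decreasing marginal costs and upper limits `u`, if `T ≤ ∑ u_i` then there is an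
optimal assignment in which at most one resource is at intermediary capacity
(every other resource receives 0 or exactly `u_i` tasks). -/
theorem mardec_structure
    (n : ℕ) (hn : 1 ≤ n) (C : Fin n → ℕ → ℝ)
    (h0 : ∀ i, C i 0 = 0)
    (hnonneg : ∀ (i : Fin n) (j : ℕ), 0 ≤ C i (j + 1) - C i j)
    (hdec : ∀ (i : Fin n) (j : ℕ), C i (j + 2) - C i (j + 1) ≤ C i (j + 1) - C i j)
    (u : Fin n → ℕ) (T : ℕ) (hT : T ≤ ∑ i, u i) :
    ∃ x : Fin n → ℕ,
      (∑ i, x i) = T ∧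
      (∀ i, x i ≤ u i) ∧
      (∀ y : Fin n → ℕ, (∑ i, y i) = T → (∀ i, y i ≤ u i) →
        (∑ i, C i (x i)) ≤ ∑ i, C i (y i)) ∧
      (∀ i j : Fin n, 0 < x i → x i < u i → 0 < x j → x j < u j → i = j) := by
  classical
  -- existence of an optimal feasible assignment
  set F : Finset (Fin n → ℕ) :=
    (Fintype.piFinset (fun i => Finset.range (u i + 1))).filter (fun x => (∑ i, x i) = T)
    with hF
  have hmemF : ∀ x : Fin n → ℕ, x ∈ F ↔ ((∑ i, x i) = T ∧ ∀ i, x i ≤ u i) := by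
    intro x
    simp [hF, Fintype.mem_piFinset, Nat.lt_succ_iff, and_comm]
  obtain ⟨z, hz1, hz2⟩ := mardec_feasible u T hT
  have hne : F.Nonempty := ⟨z, (hmemF z).mpr ⟨hz1, hz2⟩⟩
  obtain ⟨x0, hx0F, hx0min⟩ := Finset.exists_min_image F (fun x => ∑ i, C i (x i)) hne
  obtain ⟨hx0s, hx0u⟩ := (hmemF x0).mp hx0F
  have hx0opt : ∀ y : Fin n → ℕ, (∑ i, y i) = T → (∀ i, y i ≤ u i) →
      (∑ i, C i (x0 i)) ≤ ∑ i, C i (y i) :=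
    fun y hy1 hy2 => hx0min y ((hmemF y).mpr ⟨hy1, hy2⟩)
  clear hx0F hx0min hne hz1 hz2
  -- reduce the number of intermediary resources by strong induction
  suffices h : ∀ c (x : Fin n → ℕ),
      (Finset.univ.filter (fun k => 0 < x k ∧ x k < u k)).card = c →
      (∑ i, x i) = T → (∀ i, x i ≤ u i) →
      (∀ y : Fin n → ℕ, (∑ i, y i) = T → (∀ i, y i ≤ u i) →
        (∑ i, C i (x i)) ≤ ∑ i, C i (y i)) →
      ∃ x' : Fin n → ℕ,
        (∑ i, x' i) = T ∧ (∀ i, x' i ≤ u i) ∧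
        (∀ y : Fin n → ℕ, (∑ i, y i) = T → (∀ i, y i ≤ u i) →
          (∑ i, C i (x' i)) ≤ ∑ i, C i (y i)) ∧
        (∀ i j : Fin n, 0 < x' i → x' i < u i → 0 < x' j → x' j < u j → i = j) by
    exact h _ x0 rfl hx0s hx0u hx0opt
  intro c
  induction c using Nat.strong_induction_on with
  | _ c ihc =>
    intro x hcard hs hu hopt
    by_cases hc1 : c ≤ 1
    · refine ⟨x, hs, hu, hopt, fun i j hi1 hi2 hj1 hj2 => ?_⟩
      have hcle : (Finset.univ.filter (fun k => 0 < x k ∧ x k < u k)).card ≤ 1 := hcard ▸ hc1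
      exact Finset.card_le_one.mp hcle i
        (Finset.mem_filter.mpr ⟨Finset.mem_univ i, hi1, hi2⟩) j
        (Finset.mem_filter.mpr ⟨Finset.mem_univ j, hj1, hj2⟩)
    · have h2 : 1 < (Finset.univ.filter (fun k => 0 < x k ∧ x k < u k)).card := by omega
      obtain ⟨i, hiS, j, hjS, hij⟩ := Finset.one_lt_card.mp h2
      obtain ⟨-, hi1, hi2⟩ := Finset.mem_filter.mp hiS
      obtain ⟨-, hj1, hj2⟩ := Finset.mem_filter.mp hjS
      -- choose a non-cost-increasing direction
      have key : ∃ x' : Fin n → ℕ, (∑ k, x' k) = T ∧ (∀ k, x' k ≤ u k) ∧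
          (∀ y : Fin n → ℕ, (∑ k, y k) = T → (∀ k, y k ≤ u k) →
            (∑ k, C k (x' k)) ≤ ∑ k, C k (y k)) ∧
          (∀ k, k ≠ i → k ≠ j → x' k = x k) ∧
          ((x' i = u i ∨ x' j = 0) ∨ (x' j = u j ∨ x' i = 0)) := by
        by_cases hA : C i (x i + 1) - C i (x i) ≤ C j (x j) - C j (x j - 1)
        · obtain ⟨x', a, b, d, e, f⟩ :=
            mardec_exchange C hdec u T hij (x j) x rfl hs hu hopt hj1 hi2 hA
          exact ⟨x', a, b, d, e, Or.inl f⟩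
        · push_neg at hA
          have hB : C j (x j + 1) - C j (x j) ≤ C i (x i) - C i (x i - 1) := by
            have hdj := hdec j (x j - 1)
            have hdi := hdec i (x i - 1)
            have ej1 : x j - 1 + 2 = x j + 1 := by omega
            have ej2 : x j - 1 + 1 = x j := by omega
            have ei1 : x i - 1 + 2 = x i + 1 := by omega
            have ei2 : x i - 1 + 1 = x i := by omega
            rw [ej1, ej2] at hdj
            rw [ei1, ei2] at hdi
            linarith
          obtain ⟨x', a, b, d, e, f⟩ :=
            mardec_exchange C hdec u T hij.symm (x i) x rfl hs hu hopt hi1 hj2 hB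
          exact ⟨x', a, b, d, fun k h1 h2 => e k h2 h1, Or.inr f⟩
      obtain ⟨x', hs', hu', hopt', hk', hb'⟩ := key
      have hsub : (Finset.univ.filter (fun k => 0 < x' k ∧ x' k < u k)) ⊆
          (Finset.univ.filter (fun k => 0 < x k ∧ x k < u k)) := by
        intro k hk
        by_cases hk1 : k = i
        · subst hk1; exact hiS
        by_cases hk2 : k = j
        · subst hk2; exact hjS
        · obtain ⟨-, hka, hkb⟩ := Finset.mem_filter.mp hk
          rw [hk' k hk1 hk2] at hka hkb
          exact Finset.mem_filter.mpr ⟨Finset.mem_univ k, hka, hkb⟩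
      have hssub : (Finset.univ.filter (fun k => 0 < x' k ∧ x' k < u k)) ⊂
          (Finset.univ.filter (fun k => 0 < x k ∧ x k < u k)) := by
        refine ⟨hsub, fun hsup => ?_⟩
        rcases hb' with (hbi | hbi) | (hbi | hbi)
        · have := Finset.mem_filter.mp (hsup hiS)
          omega
        · have := Finset.mem_filter.mp (hsup hjS)
          omega
        · have := Finset.mem_filter.mp (hsup hjS)
          omega
        · have := Finset.mem_filter.mp (hsup hiS)
          omega
      have hlt : (Finset.univ.filter (fun k => 0 < x' k ∧ x' k < u k)).card < c :=
        hcard ▸ Finset.card_lt_card hssub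
      exact ihc _ hlt x' rfl hs' hu' hopt'
end

section
/- Consider n resources with cost functions C_i : ℕ → ℝ satisfying C_i(0) = 0, nonnegative marginal costs, and increasing marginal costs (M_i(j) ≤ M_i(j+1) for all j ≥ 1), together with upper limits u_i ∈ ℕ. Let t ∈ ℕ with t < ∑_i u_i, and let x be an optimal assignment for t tasks (∑_i x_i = t, x_i ≤ u_i for all i, total cost minimal). Let k be any index with x_k < u_k that minimizes M_i(x_i + 1) = C_i(x_i + 1) − C_i(x_i) over all i with x_i < u_i. Then the assignment x' obtained from x by setting x'_k = x_k + 1 (and x'_i = x_i for i ≠ k) is an optimal assignment for t + 1 tasks. (Inductive step of the greedy algorithm MarIn.) -/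
lemma marin_marg_le (C : ℕ → ℝ)
    (hinc : ∀ j, C (j + 1) - C j ≤ C (j + 2) - C (j + 1)) :
    ∀ {a b : ℕ}, a ≤ b → C (a + 1) - C a ≤ C (b + 1) - C b := by
  intro a b h
  induction b with
  | zero => simp [Nat.le_zero.mp h]
  | succ b ih =>
    rcases Nat.lt_or_ge a (b + 1) with h' | h'
    · exact le_trans (ih (Nat.lt_succ_iff.mp h')) (hinc b)
    · have : a = b + 1 := le_antisymm h h'
      subst this; exact le_refl _

lemma marin_sum_update {n : ℕ} (C : Fin n → ℕ → ℝ) (x : Fin n → ℕ)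
    (k : Fin n) (v : ℕ) :
    (∑ i, C i (Function.update x k v i)) = (∑ i, C i (x i)) + (C k v - C k (x k)) := by
  have h : (∑ i, (C i (Function.update x k v i) - C i (x i))) = C k v - C k (x k) := by
    rw [Finset.sum_eq_single k]
    · simp
    · intro i _ hi
      simp [Function.update_apply, hi]
    · intro h; exact absurd (Finset.mem_univ k) h
  rw [Finset.sum_sub_distrib] at h
  linarith

lemma marin_sum_update_nat {n : ℕ} (x : Fin n → ℕ) (k : Fin n) (v : ℕ) :
    (∑ i, Function.update x k v i) + x k = (∑ i, x i) + v := by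
  rw [Finset.sum_update_of_mem (Finset.mem_univ k)]
  rw [show (Finset.univ : Finset (Fin n)) \ {k} = Finset.univ.erase k from
    Finset.sdiff_singleton_eq_erase k Finset.univ]
  rw [← Finset.add_sum_erase _ x (Finset.mem_univ k)]
  omega

/-- Inductive step of the greedy algorithm MarIn: with nonnegative and
increasing marginal costs, if `x` is an optimal assignment for `t < ∑ u_i`
tasks and `k` minimizes the next marginal cost among resources below their
upper limit, then assigning one more task to `k` gives an optimal assignment
for `t + 1` tasks. -/
theorem marin_inductive_step
    (n : ℕ) (hn : 1 ≤ n) (C : Fin n → ℕ → ℝ)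
    (h0 : ∀ i, C i 0 = 0)
    (hnonneg : ∀ (i : Fin n) (j : ℕ), 0 ≤ C i (j + 1) - C i j)
    (hinc : ∀ (i : Fin n) (j : ℕ), C i (j + 1) - C i j ≤ C i (j + 2) - C i (j + 1))
    (u : Fin n → ℕ) (t : ℕ) (ht : t < ∑ i, u i)
    (x : Fin n → ℕ) (hxsum : (∑ i, x i) = t) (hxu : ∀ i, x i ≤ u i)
    (hxopt : ∀ y : Fin n → ℕ, (∑ i, y i) = t → (∀ i, y i ≤ u i) →
      (∑ i, C i (x i)) ≤ ∑ i, C i (y i))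
    (k : Fin n) (hk : x k < u k)
    (hkmin : ∀ i : Fin n, x i < u i →
      C k (x k + 1) - C k (x k) ≤ C i (x i + 1) - C i (x i)) :
    (∑ i, Function.update x k (x k + 1) i) = t + 1 ∧
    (∀ i, Function.update x k (x k + 1) i ≤ u i) ∧
    (∀ y : Fin n → ℕ, (∑ i, y i) = t + 1 → (∀ i, y i ≤ u i) →
      (∑ i, C i (Function.update x k (x k + 1) i)) ≤ ∑ i, C i (y i)) := by
  have hsum' : (∑ i, Function.update x k (x k + 1) i) = t + 1 := by
    have := marin_sum_update_nat x k (x k + 1)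
    omega
  refine ⟨hsum', ?_, ?_⟩
  · intro i
    rcases eq_or_ne i k with rfl | hi
    · simpa using hk
    · simp [Function.update_apply, hi, hxu i]
  · intro y hy hyu
    -- find j with x j < y j
    have hex : ∃ j, x j < y j := by
      by_contra h
      push_neg at h
      have : (∑ i, y i) ≤ ∑ i, x i := Finset.sum_le_sum fun i _ => h i
      omega
    obtain ⟨j, hj⟩ := hex
    obtain ⟨m, hm⟩ : ∃ m, y j = m + 1 := ⟨y j - 1, by omega⟩
    set y' := Function.update y j m with hy'
    have hy'sum : (∑ i, y' i) = t := by
      have := marin_sum_update_nat y j m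
      rw [← hy'] at this
      omega
    have hy'u : ∀ i, y' i ≤ u i := by
      intro i
      rcases eq_or_ne i j with rfl | hi
      · simp [hy']
        have := hyu i
        omega
      · simp [hy', Function.update_apply, hi, hyu i]
    have hopt := hxopt y' hy'sum hy'u
    have hX := marin_sum_update C x k (x k + 1)
    have hY : (∑ i, C i (y i)) = (∑ i, C i (y' i)) + (C j (m + 1) - C j m) := by
      have := marin_sum_update C y j m
      rw [← hy'] at this
      rw [this, hm]
      ring
    have hxju : x j < u j := lt_of_lt_of_le hj (hyu j)
    have h1 : C k (x k + 1) - C k (x k) ≤ C j (x j + 1) - C j (x j) := hkmin j hxju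
    have h2 : C j (x j + 1) - C j (x j) ≤ C j (m + 1) - C j m :=
      marin_marg_le (C j) (hinc j) (by omega)
    linarith
end

section
/- Consider n resources with cost functions C_i : ℕ → ℝ satisfying C_i(0) = 0, nonnegative marginal costs, and increasing marginal costs (M_i(j) ≤ M_i(j+1) for all j ≥ 1), together with upper limits u_i ∈ ℕ. Let T ∈ ℕ with T ≤ ∑_i u_i, and let x be an assignment feasible for T tasks (∑_i x_i = T, x_i ≤ u_i) such that every used marginal cost is at most every unused marginal cost: for all i with x_i < u_i and all j with x_j ≥ 1, one has M_j(x_j) ≤ M_i(x_i + 1). Then x is an optimal assignment for T tasks. (This is the property through which the greedy schedule built by MarIn, which always assigns the next task to a resource of minimal marginal cost, is shown optimal.) -/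
/-- Optimality of the greedy schedule built by MarIn: with nonnegative and
increasing marginal costs and upper limits, a feasible assignment for `T`
tasks in which every used marginal cost is at most every unused marginal cost
is optimal. -/
theorem marin_greedy_optimal
    (n : ℕ) (hn : 1 ≤ n) (C : Fin n → ℕ → ℝ)
    (h0 : ∀ i, C i 0 = 0)
    (hnonneg : ∀ (i : Fin n) (j : ℕ), 0 ≤ C i (j + 1) - C i j)
    (hinc : ∀ (i : Fin n) (j : ℕ), C i (j + 1) - C i j ≤ C i (j + 2) - C i (j + 1))
    (u : Fin n → ℕ) (T : ℕ) (hT : T ≤ ∑ i, u i)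
    (x : Fin n → ℕ) (hxsum : (∑ i, x i) = T) (hxu : ∀ i, x i ≤ u i)
    (hgreedy : ∀ i : Fin n, x i < u i → ∀ j : Fin n, 1 ≤ x j →
      C j (x j) - C j (x j - 1) ≤ C i (x i + 1) - C i (x i)) :
    ∀ y : Fin n → ℕ, (∑ i, y i) = T → (∀ i, y i ≤ u i) →
      (∑ i, C i (x i)) ≤ ∑ i, C i (y i) := by
  intro y hysum hyu
  by_cases hS : ∃ i, x i < u i
  · obtain ⟨i0, hi0S, hmin⟩ :=
      (Finset.univ.filter (fun i => x i < u i)).exists_min_image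
        (fun i => C i (x i + 1) - C i (x i))
        (by obtain ⟨i, hi⟩ := hS; exact ⟨i, by simp [hi]⟩)
    set L := C i0 (x i0 + 1) - C i0 (x i0) with hL
    have hi0u : x i0 < u i0 := by simpa using hi0S
    have hLle : ∀ i, x i < u i → L ≤ C i (x i + 1) - C i (x i) := fun i hi =>
      hmin i (by simp [hi])
    have hgeL : ∀ j, 1 ≤ x j → C j (x j) - C j (x j - 1) ≤ L := fun j hj =>
      hgreedy i0 hi0u j hj
    have Dmono : ∀ i : Fin n, Monotone (fun j => C i (j + 1) - C i j) := fun i =>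
      monotone_nat_of_le_succ (fun j => hinc i j)
    have key : ∀ i : Fin n, ∀ m, m ≤ u i →
        C i (x i) + L * ((m : ℝ) - (x i : ℝ)) ≤ C i m := by
      intro i m hm
      rcases le_or_gt (x i) m with h | h
      · revert hm
        induction m, h using Nat.le_induction with
        | base => intro _; simp
        | succ m hxm ih =>
          intro hm1
          have hmu : m ≤ u i := by omega
          have hxiu : x i < u i := by omega
          have h1 : L ≤ C i (m + 1) - C i m :=
            le_trans (hLle i hxiu) (Dmono i hxm)
          have h2 := ih hmu
          push_cast
          push_cast at h2
          linarith
      · have hx1 : 1 ≤ x i := by omega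
        have hDle : ∀ k, k < x i → C i (k + 1) - C i k ≤ L := by
          intro k hk
          have hmono := Dmono i (show k ≤ x i - 1 by omega)
          have hx : x i - 1 + 1 = x i := by omega
          simp only [hx] at hmono
          exact le_trans hmono (hgeL i hx1)
        have aux : ∀ k m', m' + k = x i → C i (x i) ≤ C i m' + L * (k : ℝ) := by
          intro k
          induction k with
          | zero => intro m' hmk; simp [← hmk]
          | succ k ih =>
            intro m' hmk
            have h1 := hDle m' (by omega)
            have h2 := ih (m' + 1) (by omega)
            push_cast
            push_cast at h2
            linarith
        have haux := aux (x i - m) m (by omega)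
        have hc : ((x i - m : ℕ) : ℝ) = (x i : ℝ) - (m : ℝ) :=
          Nat.cast_sub h.le
        rw [hc] at haux
        have hring : L * ((m : ℝ) - (x i : ℝ)) = -(L * ((x i : ℝ) - (m : ℝ))) := by
          ring
        linarith [hring]
    have hsum := Finset.sum_le_sum (fun i (_ : i ∈ Finset.univ) => key i (y i) (hyu i))
    have hzero : ∑ i, L * ((y i : ℝ) - (x i : ℝ)) = 0 := by
      rw [← Finset.mul_sum, Finset.sum_sub_distrib]
      have hy : ∑ i, ((y i : ℝ)) = (T : ℝ) := by
        rw [← hysum]; push_cast; ring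
      have hx : ∑ i, ((x i : ℝ)) = (T : ℝ) := by
        rw [← hxsum]; push_cast; ring
      rw [hy, hx]; ring
    rw [Finset.sum_add_distrib, hzero, add_zero] at hsum
    exact hsum
  · push_neg at hS
    have hxe : ∀ i, x i = u i := fun i => le_antisymm (hxu i) (hS i)
    have hyx : ∀ i ∈ Finset.univ, y i = x i := by
      rw [← Finset.sum_eq_sum_iff_of_le
        (fun i _ => (hyu i).trans_eq (hxe i).symm)]
      rw [hysum, hxsum]
    exact le_of_eq (Finset.sum_congr rfl (fun i hi => by rw [hyx i hi])).symm
end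

section
/- Consider n resources with linear cost functions C_i(j) = a_i · j where a_i ≥ 0 (constant marginal costs), together with upper limits u_i ∈ ℕ, and let T ∈ ℕ with T ≤ ∑_i u_i. Let t < T and let x be an optimal assignment for t tasks (∑_i x_i = t, x_i ≤ u_i, total cost ∑_i a_i x_i minimal). Suppose k is an index with x_k = 0 such that a_k ≤ a_i for every i with x_i < u_i, and set a := min(u_k, T − t). Then the assignment x' obtained from x by setting x'_k = a (and x'_i = x_i for i ≠ k) is an optimal assignment for t + a tasks. (Inductive step of the algorithm MarCo.) -/
private lemma marco_exists_decrement {n : ℕ} (s : Finset (Fin n)) (w : Fin n → ℕ) (m : ℕ)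
    (hm : m ≤ ∑ i ∈ s, w i) :
    ∃ d : Fin n → ℕ, (∀ i, d i ≤ w i) ∧ (∀ i, i ∉ s → d i = 0) ∧ ∑ i ∈ s, d i = m := by
  induction s using Finset.induction_on generalizing m with
  | empty =>
    simp only [Finset.sum_empty, Nat.le_zero] at hm
    exact ⟨0, by simp, by simp, by simp [hm]⟩
  | @insert j s hj ih =>
    rw [Finset.sum_insert hj] at hm
    obtain ⟨d, hd1, hd2, hd3⟩ := ih (m := m - min m (w j)) (by omega)
    refine ⟨Function.update d j (min m (w j)), ?_, ?_, ?_⟩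
    · intro i
      rcases eq_or_ne i j with rfl | h
      · simp
      · simpa [Function.update_of_ne h] using hd1 i
    · intro i hi
      have h1 : i ≠ j := fun h => hi (h ▸ Finset.mem_insert_self j s)
      have h2 : i ∉ s := fun h => hi (Finset.mem_insert_of_mem h)
      simp [Function.update_of_ne h1, hd2 i h2]
    · rw [Finset.sum_insert hj, Function.update_self]
      have : ∑ i ∈ s, Function.update d j (min m (w j)) i = ∑ i ∈ s, d i :=
        Finset.sum_congr rfl fun i hi =>
          Function.update_of_ne (by rintro rfl; exact hj hi) _ _
      rw [this, hd3]
      omega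

/-- Inductive step of the algorithm MarCo: with linear (constant-marginal)
costs `C_i(j) = a_i · j`, if `x` is optimal for `t < T` tasks and `k` is an
unused resource of minimal rate among the non-saturated resources, then
assigning `min (u_k) (T − t)` tasks to `k` gives an optimal assignment for
`t + min (u_k) (T − t)` tasks. -/
theorem marco_inductive_step
    (n : ℕ) (hn : 1 ≤ n) (a : Fin n → ℝ) (ha : ∀ i, 0 ≤ a i)
    (u : Fin n → ℕ) (T : ℕ) (hT : T ≤ ∑ i, u i)
    (t : ℕ) (ht : t < T)
    (x : Fin n → ℕ) (hxsum : (∑ i, x i) = t) (hxu : ∀ i, x i ≤ u i)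
    (hxopt : ∀ y : Fin n → ℕ, (∑ i, y i) = t → (∀ i, y i ≤ u i) →
      (∑ i, a i * (x i : ℝ)) ≤ ∑ i, a i * (y i : ℝ))
    (k : Fin n) (hk0 : x k = 0)
    (hkmin : ∀ i : Fin n, x i < u i → a k ≤ a i) :
    (∑ i, Function.update x k (min (u k) (T - t)) i) = t + min (u k) (T - t) ∧
    (∀ i, Function.update x k (min (u k) (T - t)) i ≤ u i) ∧
    (∀ y : Fin n → ℕ, (∑ i, y i) = t + min (u k) (T - t) → (∀ i, y i ≤ u i) →
      (∑ i, a i * (Function.update x k (min (u k) (T - t)) i : ℝ)) ≤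
        ∑ i, a i * (y i : ℝ)) := by
  set m := min (u k) (T - t) with hm
  have hxk_erase : ∑ i ∈ Finset.univ.erase k, x i = t := by
    have := Finset.sum_erase_add Finset.univ x (Finset.mem_univ k)
    omega
  have hsum' : (∑ i, Function.update x k m i) = t + m := by
    rw [← Finset.sum_erase_add _ _ (Finset.mem_univ k), Function.update_self]
    have : ∑ i ∈ Finset.univ.erase k, Function.update x k m i
        = ∑ i ∈ Finset.univ.erase k, x i :=
      Finset.sum_congr rfl fun i hi =>
        Function.update_of_ne (Finset.ne_of_mem_erase hi) _ _
    rw [this, hxk_erase]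
  have hu' : ∀ i, Function.update x k m i ≤ u i := by
    intro i
    rcases eq_or_ne i k with rfl | h
    · simp [hm]
    · simpa [Function.update_of_ne h] using hxu i
  refine ⟨hsum', hu', ?_⟩
  intro y hy hyu
  -- cost of x'
  have hcostx' : (∑ i, a i * (Function.update x k m i : ℝ))
      = (∑ i, a i * (x i : ℝ)) + a k * (m : ℝ) := by
    rw [← Finset.sum_erase_add _ _ (Finset.mem_univ k),
        ← Finset.sum_erase_add _ (fun i => a i * (x i : ℝ)) (Finset.mem_univ k)]
    have h1 : ∑ i ∈ Finset.univ.erase k, a i * ((Function.update x k m i : ℕ) : ℝ)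
        = ∑ i ∈ Finset.univ.erase k, a i * (x i : ℝ) :=
      Finset.sum_congr rfl fun i hi => by
        rw [Function.update_of_ne (Finset.ne_of_mem_erase hi)]
    rw [h1, Function.update_self, hk0]
    push_cast
    ring
  -- the cheap (already saturated) resources
  set s := Finset.univ.filter (fun i : Fin n => ¬ a i < a k) with hs
  have hSy : ∑ i ∈ Finset.univ.filter (fun i : Fin n => a i < a k), y i ≤ t := by
    calc ∑ i ∈ Finset.univ.filter (fun i : Fin n => a i < a k), y i
        ≤ ∑ i ∈ Finset.univ.filter (fun i : Fin n => a i < a k), x i := by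
          apply Finset.sum_le_sum
          intro i hi
          have hai : a i < a k := (Finset.mem_filter.mp hi).2
          have hxi : x i = u i := by
            by_contra h
            exact absurd (hkmin i (lt_of_le_of_ne (hxu i) h)) (not_le.mpr hai)
          rw [hxi]; exact hyu i
      _ ≤ ∑ i, x i := Finset.sum_le_sum_of_subset (Finset.subset_univ _)
      _ = t := hxsum
  have hms : m ≤ ∑ i ∈ s, y i := by
    have h := Finset.sum_filter_add_sum_filter_not Finset.univ
      (fun i : Fin n => a i < a k) y
    rw [hs]
    omega
  obtain ⟨d, hd1, hd2, hd3⟩ := marco_exists_decrement s y m hms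
  have hdsum : ∑ i, d i = m := by
    have h0 : ∑ i ∈ Finset.univ.filter (fun i : Fin n => a i < a k), d i = 0 := by
      apply Finset.sum_eq_zero
      intro i hi
      apply hd2
      simp only [hs, Finset.mem_filter, Finset.mem_univ, true_and, not_not]
      exact (Finset.mem_filter.mp hi).2
    have h := Finset.sum_filter_add_sum_filter_not Finset.univ
      (fun i : Fin n => a i < a k) d
    rw [hs] at hd3
    omega
  set z : Fin n → ℕ := fun i => y i - d i with hz
  have hzy : ∀ i, z i + d i = y i := fun i => by
    have := hd1 i; simp only [hz]; omega
  have hzsum : ∑ i, z i = t := by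
    have : (∑ i, z i) + (∑ i, d i) = ∑ i, y i := by
      rw [← Finset.sum_add_distrib]
      exact Finset.sum_congr rfl fun i _ => hzy i
    omega
  have hzu : ∀ i, z i ≤ u i := fun i => le_trans (Nat.sub_le _ _) (hyu i)
  have hxz := hxopt z hzsum hzu
  have hyzd : (∑ i, a i * (y i : ℝ))
      = (∑ i, a i * (z i : ℝ)) + ∑ i, a i * (d i : ℝ) := by
    rw [← Finset.sum_add_distrib]
    apply Finset.sum_congr rfl
    intro i _
    have : ((z i : ℝ) + (d i : ℝ)) = (y i : ℝ) := by
      exact_mod_cast congrArg (Nat.cast : ℕ → ℝ) (hzy i)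
    rw [← this]; ring
  have hdcost : a k * (m : ℝ) ≤ ∑ i, a i * (d i : ℝ) := by
    have : a k * (m : ℝ) = ∑ i, a k * (d i : ℝ) := by
      rw [← Finset.mul_sum, ← Nat.cast_sum, hdsum]
    rw [this]
    apply Finset.sum_le_sum
    intro i _
    by_cases hi : i ∈ s
    · have : a k ≤ a i := not_lt.mp (Finset.mem_filter.mp hi).2
      exact mul_le_mul_of_nonneg_right this (Nat.cast_nonneg _)
    · rw [hd2 i hi]; simp
  rw [hcostx', hyzd]
  linarith
end

section
/- With the multiple-choice knapsack setup, suppose there exists at least one selection of weight at most T, and let τ* be the maximum weight over all selections of weight at most T. Let M ∈ ℝ be any constant strictly greater than the sum ∑_{i=1}^n ∑_{j ∈ N_i} c_{ij} of the costs of all items. Then a selection s with weight(s) ≤ T minimizes cost(s) − M · weight(s) among all selections of weight at most T if and only if weight(s) = τ* and cost(s) ≤ cost(s') for every selection s' with weight(s') = τ*. In particular, such minimizers are exactly the maximal knapsack packings of minimum cost, i.e., the optimal solutions of the Multiple-Choice Minimum-Cost Maximal Knapsack Packing Problem ((MC)²MKP). -/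
/-- Characterization of the optimal solutions of (MC)²MKP: if some selection
has weight at most `T`, `τ*` is the maximum weight among selections of weight
at most `T`, and `M` is strictly greater than the total cost of all items,
then a selection `s` of weight at most `T` minimizes `cost(s) − M · weight(s)`
among all selections of weight at most `T` if and only if it is a maximal
knapsack packing of minimum cost, i.e. `weight(s) = τ*` and `s` has minimal
cost among selections of weight `τ*`. -/
theorem mc2mkp_objective_characterization
    {n : ℕ} (hn : 1 ≤ n) (ι : Fin n → Type)
    [∀ i, Fintype (ι i)] [∀ i, Nonempty (ι i)]
    (c : ∀ i, ι i → ℝ) (hc : ∀ (i : Fin n) (j : ι i), 0 ≤ c i j)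
    (w : ∀ i, ι i → ℕ) (T : ℕ)
    (hfeas : ∃ s : ∀ i, ι i, (∑ i, w i (s i)) ≤ T)
    (τstar : ℕ)
    (hτmem : ∃ s : ∀ i, ι i, (∑ i, w i (s i)) ≤ T ∧ (∑ i, w i (s i)) = τstar)
    (hτmax : ∀ s : ∀ i, ι i, (∑ i, w i (s i)) ≤ T → (∑ i, w i (s i)) ≤ τstar)
    (M : ℝ) (hM : (∑ i, ∑ j : ι i, c i j) < M) :
    ∀ s : ∀ i, ι i, (∑ i, w i (s i)) ≤ T →
      ((∀ s' : ∀ i, ι i, (∑ i, w i (s' i)) ≤ T →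
          (∑ i, c i (s i)) - M * ((∑ i, w i (s i) : ℕ) : ℝ) ≤
            (∑ i, c i (s' i)) - M * ((∑ i, w i (s' i) : ℕ) : ℝ)) ↔
        ((∑ i, w i (s i)) = τstar ∧
          ∀ s' : ∀ i, ι i, (∑ i, w i (s' i)) = τstar →
            (∑ i, c i (s i)) ≤ ∑ i, c i (s' i))) := by
  -- basic cost bounds
  have hcost_nonneg : ∀ s : ∀ i, ι i, (0:ℝ) ≤ ∑ i, c i (s i) := fun s =>
    Finset.sum_nonneg fun i _ => hc i (s i)
  have hcost_lt : ∀ s : ∀ i, ι i, (∑ i, c i (s i)) < M := by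
    intro s
    refine lt_of_le_of_lt ?_ hM
    refine Finset.sum_le_sum fun i _ => ?_
    exact Finset.single_le_sum (fun j _ => hc i j) (Finset.mem_univ (s i))
  have hMpos : 0 < M := lt_of_le_of_lt (hcost_nonneg (fun i => Classical.arbitrary (ι i))) (hcost_lt _)
  intro s hs
  constructor
  · intro hmin
    obtain ⟨s0, hs0T, hs0w⟩ := hτmem
    have hws : (∑ i, w i (s i)) = τstar := by
      by_contra hne
      have hlt : (∑ i, w i (s i)) < τstar := lt_of_le_of_ne (hτmax s hs) hne
      have h1 : (1:ℝ) ≤ (τstar : ℝ) - (∑ i, w i (s i) : ℕ) := by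
        have : (∑ i, w i (s i)) + 1 ≤ τstar := hlt
        have := (Nat.cast_le (α := ℝ)).2 this
        push_cast at this ⊢
        linarith
      have := hmin s0 hs0T
      rw [hs0w] at this
      have hcs0 := hcost_lt s0
      have hcs := hcost_nonneg s
      nlinarith [mul_le_mul_of_nonneg_left h1 hMpos.le]
    refine ⟨hws, fun s' hs' => ?_⟩
    have hs'T : (∑ i, w i (s' i)) ≤ T := by rw [hs']; rw [hws] at hs; exact hs
    have := hmin s' hs'T
    rw [hws, hs'] at this
    linarith
  · rintro ⟨hws, hmin⟩
    intro s' hs'T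
    rcases eq_or_lt_of_le (hτmax s' hs'T) with heq | hlt
    · have := hmin s' heq
      rw [hws, heq]
      linarith
    · have h1 : (1:ℝ) ≤ (τstar : ℝ) - (∑ i, w i (s' i) : ℕ) := by
        have : (∑ i, w i (s' i)) + 1 ≤ τstar := hlt
        have := (Nat.cast_le (α := ℝ)).2 this
        push_cast at this ⊢
        linarith
      have hcs := hcost_lt s
      have hcs' := hcost_nonneg s'
      rw [hws]
      nlinarith [mul_le_mul_of_nonneg_left h1 hMpos.le]
end

section
/- Consider an instance with n resources, cost functions C_i : ℕ → ℝ with C_i(j) ≥ 0, lower limits l_i, upper limits u_i with l_i ≤ u_i, and workload T with ∑_i l_i ≤ T ≤ ∑_i u_i. Form the multiple-choice knapsack instance with capacity T in which class N_i = {l_i, l_i+1, …, u_i}, and item j ∈ N_i has cost c_{ij} = C_i(j) and weight w_{ij} = j. Then the maximum weight over selections of weight at most T equals T itself, and a selection s = (s(1),…,s(n)) is an optimal solution of (MC)²MKP for this instance (a maximal packing of minimal cost) if and only if the assignment x defined by x_i := s(i) is an optimal schedule of the scheduling instance (i.e., l_i ≤ x_i ≤ u_i, ∑_i x_i = T, and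 ∑_i C_i(x_i) is minimal among all such assignments); moreover the optimal knapsack cost equals the optimal total schedule cost. (Transformation from the Minimal Cost FL Schedule problem to (MC)²MKP.) -/
lemma exists_mid_sum (n : ℕ) (u : Fin n → ℕ) (T : ℕ) :
    ∀ l : Fin n → ℕ, (∀ i, l i ≤ u i) → (∑ i, l i) ≤ T → T ≤ (∑ i, u i) →
    ∃ s : Fin n → ℕ, (∀ i, l i ≤ s i ∧ s i ≤ u i) ∧ (∑ i, s i) = T := by
  intro l hlu h1 h2
  obtain ⟨d, hd⟩ := Nat.le.dest h1
  induction d generalizing l with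
  | zero => exact ⟨l, fun i => ⟨le_rfl, hlu i⟩, by omega⟩
  | succ d ih =>
    have hex : ∃ i, l i < u i := by
      by_contra h
      push_neg at h
      have : (∑ i, u i) ≤ ∑ i, l i := Finset.sum_le_sum (fun i _ => h i)
      omega
    obtain ⟨i, hi⟩ := hex
    set l' : Fin n → ℕ := Function.update l i (l i + 1) with hl'
    have hsum : (∑ j, l' j) = (∑ j, l j) + 1 := by
      rw [hl', Finset.sum_update_of_mem (Finset.mem_univ i),
        Finset.sdiff_singleton_eq_erase]
      have := Finset.add_sum_erase Finset.univ l (Finset.mem_univ i)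
      omega
    have hlu' : ∀ j, l' j ≤ u j := by
      intro j
      rcases eq_or_ne j i with rfl | hji
      · simp [hl']; omega
      · simp [hl', Function.update_of_ne hji]; exact hlu j
    obtain ⟨s, hs1, hs2⟩ := ih l' hlu' (by omega) (by omega)
    refine ⟨s, fun j => ⟨?_, (hs1 j).2⟩, hs2⟩
    have := (hs1 j).1
    rcases eq_or_ne j i with rfl | hji
    · simp [hl'] at this; omega
    · simpa [hl', Function.update_of_ne hji] using this

/-- Transformation from the Minimal Cost FL Schedule problem to (MC)²MKP.
With classes `N_i = {l_i, …, u_i}`, item `j ∈ N_i` of cost `C_i(j)` and weight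
`j`, and capacity `T` with `∑ l_i ≤ T ≤ ∑ u_i`: the maximum weight among
selections of weight at most `T` equals `T` (there is a selection of weight
exactly `T`), and a selection is an optimal (MC)²MKP solution — a maximal
packing (weight `≤ T`, of maximal weight among such) of minimal cost among
selections of the same weight — if and only if it is an optimal schedule
(feasible for `T` tasks with minimal total cost). -/
theorem schedule_to_knapsack_transformation
    (n : ℕ) (hn : 1 ≤ n) (C : Fin n → ℕ → ℝ) (hC : ∀ i j, 0 ≤ C i j)
    (l u : Fin n → ℕ) (hlu : ∀ i, l i ≤ u i)
    (T : ℕ) (hTl : (∑ i, l i) ≤ T) (hTu : T ≤ ∑ i, u i) :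
    -- the maximum weight over selections of weight at most T equals T
    (∃ s : Fin n → ℕ, (∀ i, s i ∈ Finset.Icc (l i) (u i)) ∧ (∑ i, s i) = T) ∧
    -- optimal (MC)²MKP solutions are exactly the optimal schedules
    (∀ s : Fin n → ℕ, (∀ i, s i ∈ Finset.Icc (l i) (u i)) →
      (((∑ i, s i) ≤ T ∧
        (∀ s' : Fin n → ℕ, (∀ i, s' i ∈ Finset.Icc (l i) (u i)) →
          (∑ i, s' i) ≤ T → (∑ i, s' i) ≤ ∑ i, s i) ∧
        (∀ s' : Fin n → ℕ, (∀ i, s' i ∈ Finset.Icc (l i) (u i)) →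
          (∑ i, s' i) = (∑ i, s i) → (∑ i, C i (s i)) ≤ ∑ i, C i (s' i))) ↔
      ((∑ i, s i) = T ∧
        ∀ y : Fin n → ℕ, (∀ i, l i ≤ y i ∧ y i ≤ u i) → (∑ i, y i) = T →
          (∑ i, C i (s i)) ≤ ∑ i, C i (y i)))) := by
  obtain ⟨s₀, hs₀, hs₀T⟩ := exists_mid_sum n u T l hlu hTl hTu
  have hs₀' : ∀ i, s₀ i ∈ Finset.Icc (l i) (u i) := by
    intro i; rw [Finset.mem_Icc]; exact hs₀ i
  refine ⟨⟨s₀, hs₀', hs₀T⟩, ?_⟩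
  intro s hs
  constructor
  · rintro ⟨h1, h2, h3⟩
    have hT : (∑ i, s i) = T := by
      have := h2 s₀ hs₀' (le_of_eq hs₀T)
      omega
    refine ⟨hT, fun y hy hyT => ?_⟩
    exact h3 y (fun i => Finset.mem_Icc.mpr (hy i)) (by omega)
  · rintro ⟨hT, hopt⟩
    refine ⟨le_of_eq hT, fun s' hs' hs'T => by omega, fun s' hs' hs'T => ?_⟩
    exact hopt s' (fun i => Finset.mem_Icc.mp (hs' i)) (by omega)
end
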